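/- For any ICC digraph D with k Type-I paths, n vertices, and t-bit messages (any t ≥ 1), the optimal index code length satisfies ℓ*_t(D) = n − k + 1; hence the ICC code is optimal. -/
import Mathlib


/-- An ICC digraph with `k` Type-I paths. `n1 i ≥ 1` is the number of vertices of
Type-I path `P_i`; `n2 i j` is the number of vertices of Type-II path `P_{i,j}`
(`0` if empty, and `n2 i i = 0`); `q i j` (1-based, `1 ≤ q i j ≤ n1 j`) is the
index of the vertex of `P_j` that the arc leaving `P_{i,j}` (or, if `P_{i,j}` is
empty, the arc leaving the terminal vertex of `P_i`) points to. -/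
structure ICCDigraph (k : ℕ) where
  n1 : Fin k → ℕ
  hn1 : ∀ i, 1 ≤ n1 i
  n2 : Fin k → Fin k → ℕ
  hdiag : ∀ i, n2 i i = 0
  q : Fin k → Fin k → ℕ
  hq1 : ∀ i j, 1 ≤ q i j
  hq2 : ∀ i j, q i j ≤ n1 j

namespace ICCDigraph

variable {k : ℕ} (D : ICCDigraph k)

/-- The vertex set: vertices `v_{a+1}^i = ⟨i, a⟩` of Type-I paths (0-based `a`),
and vertices `v_{b+1}^{ij} = ⟨(i,j), b⟩` of Type-II paths. -/
abbrev Vtx : Type :=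
  (Σ i : Fin k, Fin (D.n1 i)) ⊕ (Σ p : Fin k × Fin k, Fin (D.n2 p.1 p.2))

/-- The terminal vertex `v_{n_i}^i` of Type-I path `P_i`. -/
def terminal (i : Fin k) : D.Vtx :=
  Sum.inl ⟨i, ⟨D.n1 i - 1, by have := D.hn1 i; omega⟩⟩

/-- The arc relation of the ICC digraph: arcs along Type-I and Type-II paths,
and the interconnecting arcs. -/
def Arc : D.Vtx → D.Vtx → Prop
  | Sum.inl ⟨i, a⟩, Sum.inl ⟨j, a'⟩ =>
      (i = j ∧ (a' : ℕ) = (a : ℕ) + 1) ∨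
      (i ≠ j ∧ (a : ℕ) = D.n1 i - 1 ∧ D.n2 i j = 0 ∧ (a' : ℕ) = D.q i j - 1)
  | Sum.inl ⟨i, a⟩, Sum.inr ⟨p, b⟩ =>
      i = p.1 ∧ (a : ℕ) = D.n1 i - 1 ∧ (b : ℕ) = 0
  | Sum.inr ⟨p, b⟩, Sum.inr ⟨p', b'⟩ =>
      p = p' ∧ (b' : ℕ) = (b : ℕ) + 1
  | Sum.inr ⟨p, b⟩, Sum.inl ⟨j, a⟩ =>
      p.2 = j ∧ (b : ℕ) = D.n2 p.1 p.2 - 1 ∧ (a : ℕ) = D.q p.1 p.2 - 1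

/-- A closed directed walk (cycle) starting and ending at `v`, visiting the
vertices `v :: l`. -/
def IsClosedWalk (v : D.Vtx) (l : List D.Vtx) : Prop :=
  List.Chain D.Arc v (l ++ [v])

/-- `S` induces an acyclic subdigraph: no directed cycle lies within `S`. -/
def AcyclicOn (S : Finset D.Vtx) : Prop :=
  ¬ ∃ (v : D.Vtx) (l : List D.Vtx), v ∈ S ∧ (∀ u ∈ l, u ∈ S) ∧ D.IsClosedWalk v l

open Classical in
/-- `MAIS(D)`: the maximum order of an acyclic induced subdigraph. -/
noncomputable def mais : ℕ :=
  (Finset.univ.filter fun S : Finset D.Vtx => D.AcyclicOn S).sup Finset.card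

/-- The message (1-based index `a`) of the `a`-th vertex of Type-I path `P_i`
(`0` if out of range). -/
def msgI {t : ℕ} (x : D.Vtx → Fin t → ZMod 2) (i : Fin k) (a : ℕ) :
    Fin t → ZMod 2 :=
  if h : 1 ≤ a ∧ a ≤ D.n1 i then x (Sum.inl ⟨i, ⟨a - 1, by omega⟩⟩) else 0

/-- The message (1-based index `b`) of the `b`-th vertex of Type-II path
`P_{i,j}` (`0` if out of range). -/
def msgII {t : ℕ} (x : D.Vtx → Fin t → ZMod 2) (i j : Fin k) (b : ℕ) :
    Fin t → ZMod 2 :=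
  if h : 1 ≤ b ∧ b ≤ D.n2 i j then x (Sum.inr ⟨(i, j), ⟨b - 1, by show b - 1 < D.n2 i j; omega⟩⟩) else 0

/-- Index set of the ICC code's codewords: the `n_i - 1` codewords along each
Type-I path, the `n_{ij} - 1` codewords along each Type-II path, one codeword per
nonempty Type-II path, and the single codeword `⊕ᵢ x_{n_i}^i`. -/
abbrev CodeIdx : Type :=
  (Σ i : Fin k, Fin (D.n1 i - 1)) ⊕
    ((Σ p : Fin k × Fin k, Fin (D.n2 p.1 p.2 - 1)) ⊕
      (({p : Fin k × Fin k // 1 ≤ D.n2 p.1 p.2}) ⊕ Unit))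

/-- The ICC code: `w_a^i = x_a^i ⊕ x_{a+1}^i`, `w_b^{ij} = x_b^{ij} ⊕ x_{b+1}^{ij}`,
`w_{n_{ij}}^{ij} = x_{n_{ij}}^{ij} ⊕ x_{q_i}^j`, and `w' = ⊕ᵢ x_{n_i}^i`. -/
def code {t : ℕ} (x : D.Vtx → Fin t → ZMod 2) : D.CodeIdx → Fin t → ZMod 2
  | Sum.inl ⟨i, a⟩ => D.msgI x i ((a : ℕ) + 1) + D.msgI x i ((a : ℕ) + 2)
  | Sum.inr (Sum.inl ⟨p, b⟩) =>
      D.msgII x p.1 p.2 ((b : ℕ) + 1) + D.msgII x p.1 p.2 ((b : ℕ) + 2)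
  | Sum.inr (Sum.inr (Sum.inl ⟨p, _⟩)) =>
      D.msgII x p.1 p.2 (D.n2 p.1 p.2) + D.msgI x p.2 (D.q p.1 p.2)
  | Sum.inr (Sum.inr (Sum.inr _)) => ∑ i : Fin k, D.msgI x i (D.n1 i)

end ICCDigraph
namespace ICCDigraph

variable {k : ℕ} (D : ICCDigraph k)

/-- A global bound on path lengths. -/
def NB : ℕ := (∑ i, D.n1 i) + (∑ p : Fin k × Fin k, D.n2 p.1 p.2)

lemma n1_le_NB (i : Fin k) : D.n1 i ≤ D.NB := by
  have : D.n1 i ≤ ∑ i, D.n1 i :=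
    Finset.single_le_sum (fun _ _ => Nat.zero_le _) (Finset.mem_univ i)
  have h2 : 0 ≤ ∑ p : Fin k × Fin k, D.n2 p.1 p.2 := Nat.zero_le _
  unfold NB; omega

lemma n2_le_NB (i j : Fin k) : D.n2 i j ≤ D.NB := by
  have : D.n2 i j ≤ ∑ p : Fin k × Fin k, D.n2 p.1 p.2 :=
    Finset.single_le_sum (f := fun p : Fin k × Fin k => D.n2 p.1 p.2)
      (fun _ _ => Nat.zero_le _) (Finset.mem_univ (i, j))
  unfold NB; omega

lemma card_vtx : Fintype.card D.Vtx =
    (∑ i, D.n1 i) + (∑ p : Fin k × Fin k, D.n2 p.1 p.2) := by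
  simp [Fintype.card_sum, Fintype.card_sigma]

lemma k_le_card_vtx : k ≤ Fintype.card D.Vtx := by
  rw [card_vtx]
  have : ∑ i, D.n1 i ≥ ∑ _i : Fin k, 1 :=
    Finset.sum_le_sum (fun i _ => D.hn1 i)
  simp at this
  omega
open Classical in
lemma card_codeIdx : Fintype.card D.CodeIdx = Fintype.card D.Vtx - k + 1 := by
  classical
  have h1 : ∑ i, (D.n1 i - 1) + k = ∑ i, D.n1 i := by
    have : ∑ i, D.n1 i = ∑ i, ((D.n1 i - 1) + 1) :=
      Finset.sum_congr rfl (fun i _ => by have := D.hn1 i; omega)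
    rw [this, Finset.sum_add_distrib]
    simp
  have h2 : ∑ p : Fin k × Fin k, (D.n2 p.1 p.2 - 1)
      + ∑ p : Fin k × Fin k, (if 1 ≤ D.n2 p.1 p.2 then 1 else 0)
      = ∑ p : Fin k × Fin k, D.n2 p.1 p.2 := by
    rw [← Finset.sum_add_distrib]
    exact Finset.sum_congr rfl (fun p _ => by split <;> omega)
  have h3 : Fintype.card {p : Fin k × Fin k // 1 ≤ D.n2 p.1 p.2}
      = ∑ p : Fin k × Fin k, (if 1 ≤ D.n2 p.1 p.2 then 1 else 0) := by
    rw [Fintype.card_subtype, Finset.card_filter]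
  have h4 : Fintype.card D.CodeIdx
      = ∑ i, (D.n1 i - 1) + (∑ p : Fin k × Fin k, (D.n2 p.1 p.2 - 1)
        + (Fintype.card {p : Fin k × Fin k // 1 ≤ D.n2 p.1 p.2} + 1)) := by
    simp [Fintype.card_sum, Fintype.card_sigma]
  have h5 := D.card_vtx
  have h6 := D.k_le_card_vtx
  omega

/-- Rank function witnessing acyclicity outside the terminals `≠ i₀`. -/
def rho (i₀ : Fin k) : D.Vtx → ℕ
  | Sum.inl ⟨i, a⟩ => if i = i₀ then D.NB + a else 3 * D.NB + a
  | Sum.inr ⟨p, b⟩ => if p.1 = i₀ then 2 * D.NB + b else b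

lemma rho_inl (i₀ i : Fin k) (a : Fin (D.n1 i)) :
    D.rho i₀ (Sum.inl ⟨i, a⟩) = if i = i₀ then D.NB + a else 3 * D.NB + a := rfl

lemma rho_inr (i₀ : Fin k) (p : Fin k × Fin k) (b : Fin (D.n2 p.1 p.2)) :
    D.rho i₀ (Sum.inr ⟨p, b⟩) = if p.1 = i₀ then 2 * D.NB + b else b := rfl

lemma rho_lt (i₀ : Fin k) (v : D.Vtx) : D.rho i₀ v < 4 * D.NB + 1 := by
  rcases v with ⟨i, a⟩ | ⟨⟨i, j⟩, b⟩
  · rw [rho_inl]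
    have h1 := a.isLt; have h2 := D.n1_le_NB i
    split <;> omega
  · rw [rho_inr]
    have h1 : (b : ℕ) < D.n2 i j := b.isLt
    have h2 := D.n2_le_NB i j
    split <;> omega

lemma eq_terminal {i : Fin k} {c : Fin (D.n1 i)} (hc : (c : ℕ) = D.n1 i - 1) :
    (Sum.inl ⟨i, c⟩ : D.Vtx) = D.terminal i := by
  unfold terminal
  congr 1
  exact congrArg (Sigma.mk i) (Fin.ext hc)

lemma rho_step (i₀ : Fin k) (a b : D.Vtx)
    (ha : ∀ j, j ≠ i₀ → a ≠ D.terminal j) (h : D.Arc a b) :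
    D.rho i₀ a < D.rho i₀ b := by
  rcases a with ⟨i, c⟩ | ⟨⟨i, j⟩, c⟩ <;> rcases b with ⟨i', c'⟩ | ⟨⟨i'', j'⟩, c'⟩
  · rcases h with ⟨rfl, hc⟩ | ⟨hne, hc, _hz, hc'⟩
    · rw [rho_inl, rho_inl]; split <;> omega
    · have hii : i = i₀ := by
        by_contra hne'
        exact ha i hne' (D.eq_terminal hc)
      subst hii
      have h1 := c.isLt; have h2 := D.n1_le_NB i
      rw [rho_inl, rho_inl, if_pos rfl, if_neg (Ne.symm hne)]
      omega
  · obtain ⟨hi, hc, hb⟩ := h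
    have hii : i = i₀ := by
      by_contra hne'
      exact ha i hne' (D.eq_terminal hc)
    have h1 := c.isLt; have h2 := D.n1_le_NB i
    rw [rho_inl, rho_inr, if_pos hii]
    have : (i'', j').1 = i₀ := by rw [← hi, hii]
    rw [if_pos this]
    omega
  · obtain ⟨hj, hc, hc'⟩ := h
    simp only at hj
    subst hj
    have h1 : (c : ℕ) < D.n2 i j := c.isLt
    have h2 := D.n2_le_NB i j
    have h3 := c'.isLt
    rw [rho_inr, rho_inl]
    by_cases h5 : i = i₀ <;> by_cases h6 : j = i₀
    · exfalso
      have h0 : D.n2 i j = 0 := by rw [h5, h6]; exact D.hdiag i₀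
      omega
    · rw [if_pos h5, if_neg h6]; omega
    · rw [if_pos h6]
      have : (i, j).1 = i₀ → False := fun hh => h5 hh
      rw [if_neg this]; omega
    · rw [if_neg h6]
      have : (i, j).1 = i₀ → False := fun hh => h5 hh
      rw [if_neg this]; omega
  · obtain ⟨hp, hc⟩ := h
    rw [Prod.mk.injEq] at hp
    obtain ⟨rfl, rfl⟩ := hp
    rw [rho_inr, rho_inr]
    split <;> omega

lemma terminal_injective : Function.Injective D.terminal := by
  intro i j h
  exact congrArg Sigma.fst (Sum.inl.inj h)

open Classical in
lemma converse (hk : 1 ≤ k) {t p : ℕ} (ht : 1 ≤ t)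
    (E : (D.Vtx → Fin t → ZMod 2) → Fin p → ZMod 2)
    (hE : ∀ v : D.Vtx,
      ∃ g : (Fin p → ZMod 2) →
          ({u : D.Vtx // D.Arc v u} → Fin t → ZMod 2) → (Fin t → ZMod 2),
        ∀ x, g (E x) (fun u => x u.1) = x v) :
    t * (Fintype.card D.Vtx - k + 1) ≤ p := by
  classical
  set i₀ : Fin k := ⟨0, hk⟩ with hi₀
  set S : Finset D.Vtx := Finset.univ \ (Finset.univ.erase i₀).image D.terminal
    with hS
  have hmem : ∀ v ∈ S, ∀ j, j ≠ i₀ → v ≠ D.terminal j := by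
    intro v hv j hj hveq
    exact (Finset.mem_sdiff.mp hv).2
      (Finset.mem_image.mpr ⟨j, Finset.mem_erase.mpr ⟨hj, Finset.mem_univ j⟩,
        hveq.symm⟩)
  have hScard : S.card = Fintype.card D.Vtx - k + 1 := by
    rw [hS, Finset.card_sdiff_of_subset (Finset.subset_univ _),
      Finset.card_image_of_injective _ D.terminal_injective,
      Finset.card_erase_of_mem (Finset.mem_univ _), Finset.card_univ,
      Finset.card_univ, Fintype.card_fin]
    have := D.k_le_card_vtx
    omega
  have key : ∀ (x x' : D.Vtx → Fin t → ZMod 2), E x = E x' →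
      (∀ v ∉ S, x v = x' v) → ∀ v, x v = x' v := by
    intro x x' hEE hout
    have main : ∀ n (v : D.Vtx), 4 * D.NB + 1 - D.rho i₀ v ≤ n → x v = x' v := by
      intro n
      induction n with
      | zero =>
        intro v hv
        have := D.rho_lt i₀ v
        omega
      | succ n ih =>
        intro v hv
        by_cases hvS : v ∈ S
        · obtain ⟨g, hg⟩ := hE v
          have h1 := hg x
          have h2 := hg x'
          have hsides : (fun u : {u // D.Arc v u} => x u.1)
              = fun u : {u // D.Arc v u} => x' u.1 := by
            funext u
            by_cases huS : u.1 ∈ S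
            · apply ih
              have hstep := D.rho_step i₀ v u.1 (hmem v hvS) u.2
              have := D.rho_lt i₀ u.1
              omega
            · exact hout u.1 huS
          rw [← h1, ← h2, hEE, hsides]
        · exact hout v hvS
    intro v
    exact main (4 * D.NB + 1) v (by omega)
  set F : (({v : D.Vtx // v ∈ S}) → Fin t → ZMod 2) → (Fin p → ZMod 2) :=
    fun y => E (fun v => if h : v ∈ S then y ⟨v, h⟩ else 0) with hF
  have hFinj : Function.Injective F := by
    intro y y' hyy
    have := key _ _ hyy (by intro v hv; simp [dif_neg hv])
    funext v
    have h := this v.1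
    rwa [dif_pos v.2, dif_pos v.2] at h
  have hcard := Fintype.card_le_of_injective F hFinj
  rw [Fintype.card_fun, Fintype.card_fun, Fintype.card_fun, Fintype.card_fin,
    Fintype.card_fin, ZMod.card, Fintype.card_coe, ← pow_mul] at hcard
  rw [← hScard]
  exact (Nat.pow_le_pow_iff_right one_lt_two).mp hcard

section Decode

variable {t : ℕ} {D} (x x' : D.Vtx → Fin t → ZMod 2)

lemma msgI_eq (i : Fin k) (a : ℕ) (h1 : 1 ≤ a) (h2 : a ≤ D.n1 i) :
    D.msgI x i a = x (Sum.inl ⟨i, ⟨a - 1, by omega⟩⟩) := dif_pos ⟨h1, h2⟩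

lemma msgII_eq (i j : Fin k) (b : ℕ) (h1 : 1 ≤ b) (h2 : b ≤ D.n2 i j) :
    D.msgII x i j b
      = x (Sum.inr ⟨(i, j), ⟨b - 1, by show b - 1 < D.n2 i j; omega⟩⟩) :=
  dif_pos ⟨h1, h2⟩

lemma msgI_val (i : Fin k) (c : Fin (D.n1 i)) :
    D.msgI x i ((c : ℕ) + 1) = x (Sum.inl ⟨i, c⟩) := by
  rw [msgI_eq x i ((c : ℕ) + 1) (by omega) (by have := c.isLt; omega)]
  exact congrArg x (congrArg Sum.inl (congrArg (Sigma.mk i) (Fin.ext (by simp))))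

lemma fwdI (hcode : ∀ c, D.code x c = D.code x' c) (j : Fin k) (c : ℕ) (h1 : 1 ≤ c)
    (base : D.msgI x j c = D.msgI x' j c) :
    ∀ d, c ≤ d → d ≤ D.n1 j → D.msgI x j d = D.msgI x' j d := by
  intro d hcd
  induction d, hcd using Nat.le_induction with
  | base => intro _; exact base
  | succ d hcd ih =>
    intro hd
    have hih := ih (by omega)
    have hw : D.msgI x j (d - 1 + 1) + D.msgI x j (d - 1 + 2)
        = D.msgI x' j (d - 1 + 1) + D.msgI x' j (d - 1 + 2) :=
      hcode (Sum.inl ⟨j, ⟨d - 1, by omega⟩⟩)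
    have e1 : d - 1 + 1 = d := by omega
    have e2 : d - 1 + 2 = d + 1 := by omega
    rw [e1, e2, hih] at hw
    exact add_left_cancel hw

lemma fwdII (hcode : ∀ c, D.code x c = D.code x' c) (i j : Fin k)
    (base : D.msgII x i j 1 = D.msgII x' i j 1) :
    ∀ b, 1 ≤ b → b ≤ D.n2 i j → D.msgII x i j b = D.msgII x' i j b := by
  intro b hb
  induction b, hb using Nat.le_induction with
  | base => intro _; exact base
  | succ b hb ih =>
    intro hbd
    have hih := ih (by omega)
    have hw : D.msgII x i j (b - 1 + 1) + D.msgII x i j (b - 1 + 2)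
        = D.msgII x' i j (b - 1 + 1) + D.msgII x' i j (b - 1 + 2) :=
      hcode (Sum.inr (Sum.inl ⟨(i, j), ⟨b - 1, by show b - 1 < D.n2 i j - 1; omega⟩⟩))
    have e1 : b - 1 + 1 = b := by omega
    have e2 : b - 1 + 2 = b + 1 := by omega
    rw [e1, e2, hih] at hw
    exact add_left_cancel hw

/-- Determination lemma: the ICC code together with the side information of `v`
determines `x v`. -/
lemma det (hcode : ∀ c, D.code x c = D.code x' c) (v : D.Vtx) (hside : ∀ u, D.Arc v u → x u = x' u) : x v = x' v := by
  rcases v with ⟨i, a⟩ | ⟨⟨i, j⟩, b⟩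
  · have ha := a.isLt
    have hn1 := D.hn1 i
    by_cases hter : (a : ℕ) = D.n1 i - 1
    · -- terminal vertex of P_i
      have hterm : ∀ j, j ≠ i → D.msgI x j (D.n1 j) = D.msgI x' j (D.n1 j) := by
        intro j hji
        have hq1 := D.hq1 i j
        have hq2 := D.hq2 i j
        have hn1j := D.hn1 j
        have hq : D.msgI x j (D.q i j) = D.msgI x' j (D.q i j) := by
          by_cases hz : D.n2 i j = 0
          · have harc : D.Arc (Sum.inl ⟨i, a⟩)
                (Sum.inl ⟨j, ⟨D.q i j - 1, by omega⟩⟩) :=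
              Or.inr ⟨Ne.symm hji, hter, hz, rfl⟩
            have hs := hside _ harc
            rw [msgI_eq x j (D.q i j) hq1 hq2, msgI_eq x' j (D.q i j) hq1 hq2]
            exact hs
          · have hpos : 1 ≤ D.n2 i j := by omega
            have harc : D.Arc (Sum.inl ⟨i, a⟩)
                (Sum.inr ⟨(i, j), ⟨0, by show 0 < D.n2 i j; omega⟩⟩) := ⟨rfl, hter, rfl⟩
            have h1 : D.msgII x i j 1 = D.msgII x' i j 1 := by
              rw [msgII_eq x i j 1 le_rfl hpos, msgII_eq x' i j 1 le_rfl hpos]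
              exact hside _ harc
            have hlastII := fwdII x x' hcode i j h1 (D.n2 i j) hpos le_rfl
            have hw : D.msgII x i j (D.n2 i j) + D.msgI x j (D.q i j)
                = D.msgII x' i j (D.n2 i j) + D.msgI x' j (D.q i j) :=
              hcode (Sum.inr (Sum.inr (Sum.inl ⟨(i, j), hpos⟩)))
            rw [hlastII] at hw
            exact add_left_cancel hw
        exact fwdI x x' hcode j (D.q i j) hq1 hq (D.n1 j) hq2 le_rfl
      have hw : ∑ j, D.msgI x j (D.n1 j) = ∑ j, D.msgI x' j (D.n1 j) :=
        hcode (Sum.inr (Sum.inr (Sum.inr ())))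
      rw [← Finset.add_sum_erase _ _ (Finset.mem_univ i),
        ← Finset.add_sum_erase _ _ (Finset.mem_univ i)] at hw
      have hsum : ∑ j ∈ Finset.univ.erase i, D.msgI x j (D.n1 j)
          = ∑ j ∈ Finset.univ.erase i, D.msgI x' j (D.n1 j) :=
        Finset.sum_congr rfl fun j hj => hterm j (Finset.mem_erase.mp hj).1
      rw [hsum] at hw
      have hfin := add_right_cancel hw
      have e : (a : ℕ) + 1 = D.n1 i := by omega
      rw [← msgI_val x i a, ← msgI_val x' i a, e]
      exact hfin
    · -- non-terminal vertex of P_i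
      have harc : D.Arc (Sum.inl ⟨i, a⟩)
          (Sum.inl ⟨i, ⟨(a : ℕ) + 1, by omega⟩⟩) := Or.inl ⟨rfl, rfl⟩
      have hs := hside _ harc
      have hw : D.msgI x i ((a : ℕ) + 1) + D.msgI x i ((a : ℕ) + 2)
          = D.msgI x' i ((a : ℕ) + 1) + D.msgI x' i ((a : ℕ) + 2) :=
        hcode (Sum.inl ⟨i, ⟨(a : ℕ), by omega⟩⟩)
      have h2 : D.msgI x i ((a : ℕ) + 2) = D.msgI x' i ((a : ℕ) + 2) := by
        rw [msgI_eq x i ((a : ℕ) + 2) (by omega) (by omega),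
          msgI_eq x' i ((a : ℕ) + 2) (by omega) (by omega)]
        exact hs
      rw [h2] at hw
      rw [← msgI_val x i a, ← msgI_val x' i a]
      exact add_right_cancel hw
  · have hb : (b : ℕ) < D.n2 i j := b.isLt
    have hpos : 1 ≤ D.n2 i j := by omega
    have hq1 := D.hq1 i j
    have hq2 := D.hq2 i j
    have hn1j := D.hn1 j
    have hxv : ∀ y : D.Vtx → Fin t → ZMod 2,
        D.msgII y i j ((b : ℕ) + 1) = y (Sum.inr ⟨(i, j), b⟩) := by
      intro y
      rw [msgII_eq y i j ((b : ℕ) + 1) (by omega) (by omega)]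
      exact congrArg y (congrArg Sum.inr
        (congrArg (Sigma.mk (i, j)) (Fin.ext (by simp))))
    by_cases hlast : (b : ℕ) = D.n2 i j - 1
    · have harc : D.Arc (Sum.inr ⟨(i, j), b⟩)
          (Sum.inl ⟨j, ⟨D.q i j - 1, by omega⟩⟩) := ⟨rfl, hlast, rfl⟩
      have hs := hside _ harc
      have hw : D.msgII x i j (D.n2 i j) + D.msgI x j (D.q i j)
          = D.msgII x' i j (D.n2 i j) + D.msgI x' j (D.q i j) :=
        hcode (Sum.inr (Sum.inr (Sum.inl ⟨(i, j), hpos⟩)))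
      have h2 : D.msgI x j (D.q i j) = D.msgI x' j (D.q i j) := by
        rw [msgI_eq x j (D.q i j) hq1 hq2, msgI_eq x' j (D.q i j) hq1 hq2]
        exact hs
      rw [h2] at hw
      have hfin := add_right_cancel hw
      have e : (b : ℕ) + 1 = D.n2 i j := by omega
      rw [← hxv x, ← hxv x', e]
      exact hfin
    · have harc : D.Arc (Sum.inr ⟨(i, j), b⟩)
          (Sum.inr ⟨(i, j), ⟨(b : ℕ) + 1, by show (b:ℕ)+1 < D.n2 i j; omega⟩⟩) :=
        ⟨rfl, rfl⟩
      have hs := hside _ harc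
      have hw : D.msgII x i j ((b : ℕ) + 1) + D.msgII x i j ((b : ℕ) + 2)
          = D.msgII x' i j ((b : ℕ) + 1) + D.msgII x' i j ((b : ℕ) + 2) :=
        hcode (Sum.inr (Sum.inl ⟨(i, j), ⟨(b : ℕ), by show (b:ℕ) < D.n2 i j - 1; omega⟩⟩))
      have h2 : D.msgII x i j ((b : ℕ) + 2) = D.msgII x' i j ((b : ℕ) + 2) := by
        rw [msgII_eq x i j ((b : ℕ) + 2) (by omega) (by omega),
          msgII_eq x' i j ((b : ℕ) + 2) (by omega) (by omega)]
        exact hs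
      rw [h2] at hw
      rw [← hxv x, ← hxv x']
      exact add_right_cancel hw

end Decode

end ICCDigraph

/-- For any ICC digraph `D` with `k` Type-I paths, `n` vertices and
`t`-bit messages, the optimal index code length is `ℓ*_t(D) = n - k + 1` packets:
there is a valid index code using `t * (n - k + 1)` bits, and every valid index
code uses at least `t * (n - k + 1)` bits. Hence the ICC code is optimal. -/
theorem stmt13 {k t : ℕ} (hk : 1 ≤ k) (ht : 1 ≤ t) (D : ICCDigraph k) :
    (∃ E : (D.Vtx → Fin t → ZMod 2) →
        Fin (t * (Fintype.card D.Vtx - k + 1)) → ZMod 2,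
      ∀ v : D.Vtx,
        ∃ g : (Fin (t * (Fintype.card D.Vtx - k + 1)) → ZMod 2) →
            ({u : D.Vtx // D.Arc v u} → Fin t → ZMod 2) → (Fin t → ZMod 2),
          ∀ x, g (E x) (fun u => x u.1) = x v) ∧
    (∀ (p : ℕ) (E : (D.Vtx → Fin t → ZMod 2) → Fin p → ZMod 2),
      (∀ v : D.Vtx,
        ∃ g : (Fin p → ZMod 2) →
            ({u : D.Vtx // D.Arc v u} → Fin t → ZMod 2) → (Fin t → ZMod 2),
          ∀ x, g (E x) (fun u => x u.1) = x v) →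
      t * (Fintype.card D.Vtx - k + 1) ≤ p) := by
  classical
  constructor
  · -- achievability via the ICC code
    have hcard : Fintype.card (D.CodeIdx × Fin t)
        = Fintype.card (Fin (t * (Fintype.card D.Vtx - k + 1))) := by
      rw [Fintype.card_prod, Fintype.card_fin, Fintype.card_fin, D.card_codeIdx]
      ring
    let e : D.CodeIdx × Fin t ≃ Fin (t * (Fintype.card D.Vtx - k + 1)) :=
      Fintype.equivOfCardEq hcard
    refine ⟨fun x m => D.code x (e.symm m).1 (e.symm m).2, fun v => ?_⟩
    refine ⟨fun y s =>
      if h : ∃ x₀ : D.Vtx → Fin t → ZMod 2,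
          (fun m => D.code x₀ (e.symm m).1 (e.symm m).2) = y ∧
          (fun u : {u : D.Vtx // D.Arc v u} => x₀ u.1) = s
        then h.choose v else 0, fun x => ?_⟩
    have hex : ∃ x₀ : D.Vtx → Fin t → ZMod 2,
        (fun m => D.code x₀ (e.symm m).1 (e.symm m).2)
          = (fun m => D.code x (e.symm m).1 (e.symm m).2) ∧
        (fun u : {u : D.Vtx // D.Arc v u} => x₀ u.1)
          = (fun u : {u : D.Vtx // D.Arc v u} => x u.1) :=
      ⟨x, rfl, rfl⟩
    beta_reduce
    rw [dif_pos hex]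
    obtain ⟨hE0, hs0⟩ := hex.choose_spec
    refine ICCDigraph.det _ x ?_ v ?_
    · intro c
      funext s
      have h := congrFun hE0 (e (c, s))
      simpa using h
    · intro u hu
      exact congrFun hs0 ⟨u, hu⟩
  · intro p E hE
    exact D.converse hk ht E hE
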